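/- limsup_{n→∞} 2·b(n) / (2n)^{log₃(√2+1)} ≤ 1. -/

import Mathlib

open Real Filter

noncomputable def nsAlpha : ℝ := Real.logb 3 (Real.sqrt 2 + 1)

lemma sqrt2_sq : Real.sqrt 2 ^ 2 = 2 := Real.sq_sqrt (by norm_num)
lemma sqrt2_nonneg' : (0:ℝ) ≤ Real.sqrt 2 := Real.sqrt_nonneg 2
lemma one_lt_sqrt2 : (1:ℝ) < Real.sqrt 2 := by
  nlinarith [sqrt2_sq, sqrt2_nonneg']
lemma sqrt2_lt : Real.sqrt 2 < 3/2 := by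
  nlinarith [sqrt2_sq, sqrt2_nonneg']

lemma nsAlpha_pos : 0 < nsAlpha :=
  Real.logb_pos (by norm_num) (by linarith [one_lt_sqrt2])

lemma nsAlpha_le_one : nsAlpha ≤ 1 := by
  have h1 : Real.sqrt 2 + 1 ≤ 3 := by linarith [sqrt2_lt]
  have h2 : Real.logb 3 (Real.sqrt 2 + 1) ≤ Real.logb 3 3 :=
    Real.logb_le_logb_of_le (by norm_num) (by positivity) h1
  simpa [nsAlpha, Real.logb_self_eq_one] using h2

lemma three_rpow : (3:ℝ) ^ nsAlpha = Real.sqrt 2 + 1 := by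
  apply Real.rpow_logb (by norm_num) (by norm_num)
  linarith [one_lt_sqrt2]

-- key numeric fact: 1 + √2/2 ≤ 2^α
lemma key_two : 1 + Real.sqrt 2 / 2 ≤ (2:ℝ) ^ nsAlpha := by
  have h8 : (1 + Real.sqrt 2 / 2) ^ (8:ℕ) ≤ ((2:ℝ) ^ nsAlpha) ^ (8:ℕ) := by
    have e1 : ((2:ℝ) ^ nsAlpha) ^ (8:ℕ) = ((256:ℝ)) ^ nsAlpha := by
      rw [← Real.rpow_natCast ((2:ℝ) ^ nsAlpha) 8, ← Real.rpow_mul (by norm_num),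
        mul_comm, Real.rpow_mul (by norm_num), Real.rpow_natCast]
      norm_num
    have e2 : ((243:ℝ)) ^ nsAlpha = (Real.sqrt 2 + 1) ^ (5:ℕ) := by
      rw [← three_rpow, ← Real.rpow_natCast ((3:ℝ) ^ nsAlpha) 5, ← Real.rpow_mul (by norm_num),
        mul_comm, Real.rpow_mul (by norm_num), Real.rpow_natCast]
      norm_num
    have h243 : ((243:ℝ)) ^ nsAlpha ≤ ((256:ℝ)) ^ nsAlpha :=
      Real.rpow_le_rpow (by norm_num) (by norm_num) nsAlpha_pos.le
    have ea : (1 + Real.sqrt 2 / 2) ^ (8:ℕ) = 577/16 + 51/2 * Real.sqrt 2 := by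
      linear_combination (561/32 + 43/4*Real.sqrt 2 + 337/64*Real.sqrt 2^2 + 15/8*Real.sqrt 2^3
        + 57/128*Real.sqrt 2^4 + 1/16*Real.sqrt 2^5 + 1/256*Real.sqrt 2^6) * sqrt2_sq
    have eb : (Real.sqrt 2 + 1) ^ (5:ℕ) = 41 + 29 * Real.sqrt 2 := by
      linear_combination (20 + 12*Real.sqrt 2 + 5*Real.sqrt 2^2 + Real.sqrt 2^3) * sqrt2_sq
    have halg : (1 + Real.sqrt 2 / 2) ^ (8:ℕ) ≤ (Real.sqrt 2 + 1) ^ (5:ℕ) := by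
      rw [ea, eb]; linarith [sqrt2_nonneg']
    rw [e1]; rw [e2] at h243; linarith
  exact le_of_pow_le_pow_left₀ (by norm_num) (Real.rpow_nonneg (by norm_num) _) h8

-- doubling: (2*x)^α = 2^α * x^α ≥ (1+√2/2) x^α
lemma two_mul_rpow {x : ℝ} (hx : 0 ≤ x) :
    (1 + Real.sqrt 2 / 2) * x ^ nsAlpha ≤ (2*x) ^ nsAlpha := by
  rw [Real.mul_rpow (by norm_num) hx]
  have := Real.rpow_nonneg hx nsAlpha
  nlinarith [key_two, sqrt2_nonneg']

-- Bernoulli consequences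
lemma rpow_upper {x h : ℝ} (hx : 0 < x) (hh : 0 ≤ h) :
    (x+h)^nsAlpha ≤ x^nsAlpha * (1 + nsAlpha * (h/x)) := by
  have hs : (0:ℝ) ≤ h/x := by positivity
  have e : x + h = x * (1 + h/x) := by field_simp
  rw [e, Real.mul_rpow hx.le (by linarith)]
  have hbern : (1 + h/x) ^ nsAlpha ≤ 1 + nsAlpha * (h/x) :=
    rpow_one_add_le_one_add_mul_self (by linarith) nsAlpha_pos.le nsAlpha_le_one
  exact mul_le_mul_of_nonneg_left hbern (Real.rpow_nonneg hx.le _)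

lemma rpow_lower {x h : ℝ} (hx : 0 < x) (hh : 0 ≤ h) :
    x^nsAlpha ≤ (x+h)^nsAlpha * (1 - nsAlpha * (h/(x+h))) := by
  have hxh : 0 < x + h := by linarith
  have ht1 : h/(x+h) ≤ 1 := by
    rw [div_le_one hxh]; linarith
  have ht0 : 0 ≤ h/(x+h) := by positivity
  have e : x = (x+h) * (1 + -(h/(x+h))) := by field_simp; ring
  calc x ^ nsAlpha = ((x+h) * (1 + -(h/(x+h)))) ^ nsAlpha := by rw [← e]
    _ ≤ (x+h)^nsAlpha * (1 + nsAlpha * (-(h/(x+h)))) := by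
        rw [Real.mul_rpow hxh.le (by linarith)]
        exact mul_le_mul_of_nonneg_left
          (rpow_one_add_le_one_add_mul_self (by linarith) nsAlpha_pos.le nsAlpha_le_one)
          (Real.rpow_nonneg hxh.le _)
    _ = (x+h)^nsAlpha * (1 - nsAlpha * (h/(x+h))) := by ring

-- inequality (iii): a^α + (√2/2)(a+2)^α ≤ (3a+2)^α for a ≥ 2
lemma ineq_iii {a : ℝ} (ha : 2 ≤ a) :
    a ^ nsAlpha + (Real.sqrt 2/2) * (a+2) ^ nsAlpha ≤ (3*a+2) ^ nsAlpha := by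
  have h1 : (1 + Real.sqrt 2 / 2) * (a+2) ^ nsAlpha ≤ (2*(a+2)) ^ nsAlpha :=
    two_mul_rpow (by linarith)
  have h2 : (2*(a+2):ℝ) ^ nsAlpha ≤ (3*a+2) ^ nsAlpha :=
    Real.rpow_le_rpow (by linarith) (by linarith) nsAlpha_pos.le
  have h3 : a ^ nsAlpha ≤ (a+2) ^ nsAlpha :=
    Real.rpow_le_rpow (by linarith) (by linarith) nsAlpha_pos.le
  nlinarith [Real.rpow_nonneg (show (0:ℝ) ≤ a+2 by linarith) nsAlpha]

-- inequality (ii): 2a^α + (√2−1)(a+2)^α ≤ (3a+2)^α for a ≥ 3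
lemma ineq_ii {a : ℝ} (ha : 3 ≤ a) :
    2 * a ^ nsAlpha + (Real.sqrt 2 - 1) * (a+2) ^ nsAlpha ≤ (3*a+2) ^ nsAlpha := by
  set α := nsAlpha with hα
  have hapos : (0:ℝ) < a := by linarith
  have hA : (0:ℝ) < a ^ α := Real.rpow_pos_of_pos hapos _
  have hC : (0:ℝ) < (3*a+2) ^ α := Real.rpow_pos_of_pos (by linarith) _
  have hU : (a+2)^α ≤ a^α * (1 + α * (2/a)) := rpow_upper hapos (by norm_num)
  have hL : (3*a)^α ≤ (3*a+2)^α * (1 - α * (2/(3*a+2))) := by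
    have := rpow_lower (x := 3*a) (h := 2) (by linarith) (by norm_num)
    simpa using this
  have hD : (3*a)^α = (Real.sqrt 2 + 1) * a^α := by
    rw [Real.mul_rpow (by norm_num) hapos.le, three_rpow]
  have hDC : (3*a)^α ≤ (3*a+2)^α :=
    Real.rpow_le_rpow (by linarith) (by linarith) nsAlpha_pos.le
  -- key: (√2−1) * a^α * (2/a) ≤ (3a+2)^α * (2/(3a+2))
  have key : (Real.sqrt 2 - 1) * (a^α * (2/a)) ≤ (3*a+2)^α * (2/(3*a+2)) := by
    have h2 : ((Real.sqrt 2 - 1) * 2 * a^α) / a ≤ ((3*a+2)^α * 2) / (3*a+2) := by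
      rw [div_le_div_iff₀ hapos (by linarith)]
      have h1 : (Real.sqrt 2 - 1) * (3*a+2) ≤ (Real.sqrt 2 + 1) * a := by
        nlinarith [sqrt2_lt, sqrt2_nonneg']
      calc (Real.sqrt 2 - 1) * 2 * a^α * (3*a+2)
        = (2*a^α) * ((Real.sqrt 2 - 1) * (3*a+2)) := by ring
      _ ≤ (2*a^α) * ((Real.sqrt 2 + 1) * a) := by
          apply mul_le_mul_of_nonneg_left h1 (by positivity)
      _ = ((Real.sqrt 2 + 1) * a^α) * a * 2 := by ring
      _ = (3*a)^α * a * 2 := by rw [hD]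
      _ ≤ (3*a+2)^α * a * 2 := by
          apply mul_le_mul_of_nonneg_right (mul_le_mul_of_nonneg_right hDC hapos.le) (by norm_num)
      _ = (3*a+2)^α * 2 * a := by ring
    calc (Real.sqrt 2 - 1) * (a^α * (2/a)) = ((Real.sqrt 2 - 1) * 2 * a^α) / a := by ring
      _ ≤ ((3*a+2)^α * 2) / (3*a+2) := h2
      _ = (3*a+2)^α * (2/(3*a+2)) := by ring
  have hs1 : (0:ℝ) ≤ Real.sqrt 2 - 1 := by linarith [one_lt_sqrt2]
  have hB : (Real.sqrt 2 - 1) * (a+2)^α ≤ (Real.sqrt 2 - 1) * (a^α * (1 + α * (2/a))) :=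
    mul_le_mul_of_nonneg_left hU hs1
  have hαpos := nsAlpha_pos
  nlinarith [key, hB, hL, hD, mul_le_mul_of_nonneg_left key hαpos.le]

section Main
variable (b : ℕ → ℝ)
    (hb0 : b 0 = 0) (hb1 : b 1 = 1)
    (hrec0 : ∀ n : ℕ, b (3 * n) = b n)
    (hrec1 : ∀ n : ℕ, b (3 * n + 1) = Real.sqrt 2 * b n + b (n + 1))
    (hrec2 : ∀ n : ℕ, b (3 * n + 2) = b n + Real.sqrt 2 * b (n + 1))

include hb0 hb1 hrec0 hrec1 hrec2

lemma b_nonneg : ∀ n, 0 ≤ b n := by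
  intro n
  induction n using Nat.strong_induction_on with
  | _ n ih =>
    rcases Nat.lt_or_ge n 3 with h | h
    · interval_cases n
      · simp [hb0]
      · simp [hb1]
      · rw [show 2 = 3*0+2 from rfl, hrec2, hb0, hb1]
        positivity
    · set q := n / 3 with hq
      have hmod : n % 3 = 0 ∨ n % 3 = 1 ∨ n % 3 = 2 := by omega
      have hq1 : 1 ≤ q := by omega
      have hqlt : q < n := by omega
      have hq1lt : q + 1 < n := by omega
      have h1 := ih q hqlt
      have h2 := ih (q+1) hq1lt
      rcases hmod with hm | hm | hm
      · rw [show n = 3*q from by omega, hrec0]; exact h1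
      · rw [show n = 3*q+1 from by omega, hrec1]; positivity
      · rw [show n = 3*q+2 from by omega, hrec2]; positivity

lemma b_main : ∀ n : ℕ, b n + b (n+1) ≤ (2*(n:ℝ)+1) ^ nsAlpha ∧
    2 * b n ≤ (2*(n:ℝ)+1) ^ nsAlpha := by
  have hbnn := b_nonneg b hb0 hb1 hrec0 hrec1 hrec2
  have hb2 : b 2 = Real.sqrt 2 := by
    rw [show 2 = 3*0+2 from rfl, hrec2, hb0, hb1]; ring
  have hb3 : b 3 = 1 := by rw [show 3 = 3*1 from rfl, hrec0, hb1]
  intro n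
  induction n using Nat.strong_induction_on with
  | _ n ih =>
    rcases Nat.lt_or_ge n 3 with h | h
    · interval_cases n
      · norm_num [hb0, hb1, Real.one_rpow]
      · norm_num [hb1, hb2, three_rpow]
        constructor
        · linarith
        · linarith [one_lt_sqrt2]
      · -- n = 2 : need √2 + 1 ≤ 5^α and 2√2 ≤ 5^α via (1+√2/2)^2 ≤ 4^α ≤ 5^α
        norm_num [hb2, hb3]
        have h4 : ((1:ℝ) + Real.sqrt 2/2) * (1 + Real.sqrt 2/2) ≤ (4:ℝ) ^ nsAlpha := by
          have e1 : ((4:ℝ)) ^ nsAlpha = (2:ℝ)^nsAlpha * (2:ℝ)^nsAlpha := by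
            rw [← Real.mul_rpow (by norm_num) (by norm_num)]; norm_num
          rw [e1]
          have := key_two
          have h0 : (0:ℝ) ≤ 1 + Real.sqrt 2/2 := by positivity
          exact mul_le_mul this this h0 (Real.rpow_nonneg (by norm_num) _)
        have h45 : ((4:ℝ)) ^ nsAlpha ≤ ((5:ℝ)) ^ nsAlpha :=
          Real.rpow_le_rpow (by norm_num) (by norm_num) nsAlpha_pos.le
        constructor
        · nlinarith [sqrt2_sq, sqrt2_lt, sqrt2_nonneg']
        · nlinarith [sqrt2_sq, sqrt2_lt, sqrt2_nonneg']
    · set q := n / 3 with hq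
      have hmod : n % 3 = 0 ∨ n % 3 = 1 ∨ n % 3 = 2 := by omega
      have hq1 : 1 ≤ q := by omega
      have hqlt : q < n := by omega
      have hq1lt : q + 1 < n := by omega
      obtain ⟨hS, hB⟩ := ih q hqlt
      obtain ⟨hS', hB'⟩ := ih (q+1) hq1lt
      have hnq : 0 ≤ b q := hbnn q
      have hnq1 : 0 ≤ b (q+1) := hbnn (q+1)
      have hnq2 : 0 ≤ b (q+2) := hbnn (q+2)
      set u : ℝ := 2*(q:ℝ)+1 with hu
      have hu3 : (3:ℝ) ≤ u := by
        have : (1:ℝ) ≤ (q:ℝ) := by exact_mod_cast hq1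
        simp only [hu]; linarith
      have hupos : (0:ℝ) < u := by linarith
      have huα : (0:ℝ) ≤ u ^ nsAlpha := Real.rpow_nonneg hupos.le _
      have hvα : (0:ℝ) ≤ (u+2) ^ nsAlpha := Real.rpow_nonneg (by linarith) _
      have hS'2 : b (q+1) + b (q+2) ≤ (u+2) ^ nsAlpha := by
        have : (2*((q:ℝ)+1)+1) = u + 2 := by simp only [hu]; ring
        have h := hS'
        push_cast at h
        rw [this] at h; exact h
      have hB'2 : 2 * b (q+1) ≤ (u+2) ^ nsAlpha := by
        have : (2*((q:ℝ)+1)+1) = u + 2 := by simp only [hu]; ring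
        have h := hB'
        push_cast at h
        rw [this] at h; exact h
      have h3u : ((3:ℝ)*u) ^ nsAlpha = (Real.sqrt 2 + 1) * u ^ nsAlpha := by
        rw [Real.mul_rpow (by norm_num) hupos.le, three_rpow]
      rcases hmod with hm | hm | hm
      · -- n = 3q
        have hn3 : n = 3*q := by omega
        rw [hn3]
        have hcast : (2*((3*q:ℕ):ℝ)+1) = 3*u - 2 := by
          push_cast; rw [hu]; ring
        rw [hcast, hrec0, hrec1]
        have htrg : ((2:ℝ)*u) ^ nsAlpha ≤ (3*u-2) ^ nsAlpha :=
          Real.rpow_le_rpow (by linarith) (by linarith) nsAlpha_pos.le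
        have hdb : (1 + Real.sqrt 2/2) * u ^ nsAlpha ≤ (2*u) ^ nsAlpha :=
          two_mul_rpow hupos.le
        constructor
        · -- b q + (√2 b q + b (q+1)) ≤ (3u-2)^α
          have h1 : Real.sqrt 2 * b q ≤ (Real.sqrt 2/2) * u ^ nsAlpha := by
            have := mul_le_mul_of_nonneg_left hB (le_of_lt (by positivity : (0:ℝ) < Real.sqrt 2/2))
            linarith [this]
          linarith
        · linarith [Real.rpow_le_rpow hupos.le (by linarith : u ≤ 3*u-2) nsAlpha_pos.le]
      · -- n = 3q+1
        have hn3 : n = 3*q+1 := by omega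
        rw [hn3]
        have hcast : (2*((3*q+1:ℕ):ℝ)+1) = 3*u := by
          push_cast; rw [hu]; ring
        have hidx : 3*q+1+1 = 3*q+2 := by omega
        rw [hcast, hidx, hrec1, hrec2, h3u]
        have hs1 : (0:ℝ) ≤ Real.sqrt 2 - 1 := by linarith [one_lt_sqrt2]
        constructor
        · nlinarith [sqrt2_nonneg']
        · nlinarith [sqrt2_nonneg']
      · -- n = 3q+2
        have hn3 : n = 3*q+2 := by omega
        rw [hn3]
        have hcast : (2*((3*q+2:ℕ):ℝ)+1) = 3*u+2 := by
          push_cast; rw [hu]; ring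
        have hidx : 3*q+2+1 = 3*(q+1) := by omega
        rw [hcast, hidx, hrec2, hrec0]
        have hii := ineq_ii hu3
        have hiii := ineq_iii (by linarith : (2:ℝ) ≤ u)
        have hs1 : (0:ℝ) ≤ Real.sqrt 2 - 1 := by linarith [one_lt_sqrt2]
        constructor
        · -- b q + √2 b(q+1) + b(q+1) ≤ (3u+2)^α
          have h1 : Real.sqrt 2 * b (q+1) ≤ (Real.sqrt 2/2) * (u+2) ^ nsAlpha := by
            have := mul_le_mul_of_nonneg_left hB'2
              (le_of_lt (by positivity : (0:ℝ) < Real.sqrt 2/2))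
            linarith [this]
          linarith
        · -- 2(b q + √2 b(q+1)) ≤ (3u+2)^α
          have h1 : (Real.sqrt 2 - 1) * (2 * b (q+1)) ≤ (Real.sqrt 2 - 1) * (u+2) ^ nsAlpha :=
            mul_le_mul_of_nonneg_left hB'2 hs1
          nlinarith [sqrt2_nonneg']

end Main

set_option maxHeartbeats 1000000 in
theorem northshield_limsup_le (b : ℕ → ℝ)
    (hb0 : b 0 = 0) (hb1 : b 1 = 1)
    (hrec0 : ∀ n : ℕ, b (3 * n) = b n)
    (hrec1 : ∀ n : ℕ, b (3 * n + 1) = Real.sqrt 2 * b n + b (n + 1))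
    (hrec2 : ∀ n : ℕ, b (3 * n + 2) = b n + Real.sqrt 2 * b (n + 1)) :
    Filter.limsup
      (fun n : ℕ => 2 * b n / (2 * (n : ℝ)) ^ Real.logb 3 (Real.sqrt 2 + 1))
      Filter.atTop ≤ 1 := by
  have hmain := b_main b hb0 hb1 hrec0 hrec1 hrec2
  have hbnn := b_nonneg b hb0 hb1 hrec0 hrec1 hrec2
  have hf0 : ∀ n : ℕ, 0 ≤ 2 * b n / (2 * (n : ℝ)) ^ Real.logb 3 (Real.sqrt 2 + 1) := by
    intro n
    apply div_nonneg (by linarith [hbnn n]) (Real.rpow_nonneg (by positivity) _)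
  have hfg : ∀ᶠ n in atTop, 2 * b n / (2 * (n : ℝ)) ^ Real.logb 3 (Real.sqrt 2 + 1)
      ≤ ((2*(n:ℝ)+1)/(2*(n:ℝ))) ^ nsAlpha := by
    filter_upwards [eventually_ge_atTop 1] with n hn
    have hn1 : (1:ℝ) ≤ (n:ℝ) := by exact_mod_cast hn
    have hpos : (0:ℝ) < (2*(n:ℝ)) ^ nsAlpha := Real.rpow_pos_of_pos (by linarith) _
    have h2 : ((2*(n:ℝ)+1)/(2*(n:ℝ))) ^ nsAlpha
        = (2*(n:ℝ)+1) ^ nsAlpha / (2*(n:ℝ)) ^ nsAlpha :=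
      Real.div_rpow (by linarith) (by linarith) _
    rw [h2]
    have hαdef : Real.logb 3 (Real.sqrt 2 + 1) = nsAlpha := rfl
    rw [hαdef]
    exact div_le_div_of_nonneg_right ((hmain n).2) hpos.le
  have hgtend : Tendsto (fun n : ℕ => ((2*(n:ℝ)+1)/(2*(n:ℝ))) ^ nsAlpha) atTop (nhds 1) := by
    have h2 : Tendsto (fun n : ℕ => 2*(n:ℝ)) atTop atTop :=
      Filter.Tendsto.const_mul_atTop (by norm_num) tendsto_natCast_atTop_atTop
    have h3 : Tendsto (fun n : ℕ => (2*(n:ℝ))⁻¹) atTop (nhds 0) := h2.inv_tendsto_atTop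
    have h4 : Tendsto (fun n : ℕ => 1 + (2*(n:ℝ))⁻¹) atTop (nhds 1) := by
      simpa using tendsto_const_nhds.add h3
    have h1 : Tendsto (fun n : ℕ => (2*(n:ℝ)+1)/(2*(n:ℝ))) atTop (nhds 1) := by
      apply h4.congr'
      filter_upwards [eventually_ge_atTop 1] with n hn
      have hn1 : (1:ℝ) ≤ (n:ℝ) := by exact_mod_cast hn
      field_simp
    have := h1.rpow_const (p := nsAlpha) (Or.inr nsAlpha_pos.le)
    simpa [Real.one_rpow] using this
  refine le_trans (Filter.limsup_le_limsup hfg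
    (Filter.isCoboundedUnder_le_of_le atTop hf0) hgtend.isBoundedUnder_le) ?_
  exact le_of_eq hgtend.limsup_eq
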